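/- For all 0 ≤ a < b ≤ 1 and all α ∈ [0, b−a), the symmetry 𝓘_(a,b) (the class in 𝒢̄ of the map fixing every point outside (a,b) and sending x to a+b−x for x ∈ (a,b)) and the restricted rotation R_{α,[a,b)} (the map fixing every point outside [a,b) and sending x to a + ((x − a + α) mod (b − a)) for x ∈ [a,b)) are commutators in 𝒢̄: each equals [u,v] = u·v·u⁻¹·v⁻¹ for some u, v ∈ 𝒢̄. -/

import Mathlib

open scoped commutatorElement


/-- `f` is an interval exchange transformation (IET) of `[0,1)`, viewed as a permutation of `ℝ`
that fixes every point outside `[0,1)`: there is a finite subdivision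
`0 = a 0 < a 1 < … < a (m+1) = 1` such that `f` is a translation on each half-open
interval `[a i, a (i+1))`. -/
def IsIET (f : Equiv.Perm ℝ) : Prop :=
  (∀ x : ℝ, x ∉ Set.Ico (0 : ℝ) 1 → f x = x) ∧
  ∃ (m : ℕ) (a : Fin (m + 2) → ℝ),
    a 0 = 0 ∧ a (Fin.last (m + 1)) = 1 ∧ StrictMono a ∧
    ∀ i : Fin (m + 1), ∃ c : ℝ, ∀ x ∈ Set.Ico (a i.castSucc) (a i.succ), f x = x + c

/-- `f` is an interval exchange transformation with flips (FIET) of `[0,1)`, viewed as a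
permutation of `ℝ` fixing every point outside `[0,1)`: there is a finite subdivision
`0 = a 0 < a 1 < … < a (m+1) = 1` such that on each open interval `(a i, a (i+1))`, `f` is an
isometry, i.e. of the form `x ↦ x + c` or `x ↦ c - x`. -/
def IsFIET (f : Equiv.Perm ℝ) : Prop :=
  (∀ x : ℝ, x ∉ Set.Ico (0 : ℝ) 1 → f x = x) ∧
  ∃ (m : ℕ) (a : Fin (m + 2) → ℝ),
    a 0 = 0 ∧ a (Fin.last (m + 1)) = 1 ∧ StrictMono a ∧
    ∀ i : Fin (m + 1),
      (∃ c : ℝ, ∀ x ∈ Set.Ioo (a i.castSucc) (a i.succ), f x = x + c) ∨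
      (∃ c : ℝ, ∀ x ∈ Set.Ioo (a i.castSucc) (a i.succ), f x = c - x)

/-- Two permutations of `ℝ` agree outside a finite set; this is equality of the classes in the
quotient group `𝒢̄` of FIETs modulo maps that are the identity off a finite set. -/
def FEq (f g : Equiv.Perm ℝ) : Prop := {x : ℝ | f x ≠ g x}.Finite

/-- The set of commutators `⁅a, b⁆ = a * b * a⁻¹ * b⁻¹` of interval exchange
transformations. -/
def IETCommutators : Set (Equiv.Perm ℝ) :=
  {x | ∃ a b : Equiv.Perm ℝ, IsIET a ∧ IsIET b ∧ x = ⁅a, b⁆}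

/-- The set of commutators `⁅a, b⁆ = a * b * a⁻¹ * b⁻¹` of interval exchange
transformations with flips. -/
def FIETCommutators : Set (Equiv.Perm ℝ) :=
  {x | ∃ a b : Equiv.Perm ℝ, IsFIET a ∧ IsFIET b ∧ x = ⁅a, b⁆}

/-- `g` is a product of at most `n` commutators of elements of the group `𝒢` of interval
exchange transformations; i.e. the commutator length of `g` in `𝒢` is at most `n`. -/
def IsProdOfIETCommutators (n : ℕ) (g : Equiv.Perm ℝ) : Prop :=
  ∃ l : List (Equiv.Perm ℝ), l.length ≤ n ∧ (∀ x ∈ l, x ∈ IETCommutators) ∧ g = l.prod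

/-- `f ∈ 𝒢_m`: `f` is an IET of `[0,1)` admitting a subdivision into at most `m` half-open
intervals on each of which it is a translation. -/
def MemGm (m : ℕ) (f : Equiv.Perm ℝ) : Prop :=
  (∀ x : ℝ, x ∉ Set.Ico (0 : ℝ) 1 → f x = x) ∧
  ∃ (k : ℕ) (a : Fin (k + 2) → ℝ), k + 1 ≤ m ∧
    a 0 = 0 ∧ a (Fin.last (k + 1)) = 1 ∧ StrictMono a ∧
    ∀ i : Fin (k + 1), ∃ c : ℝ, ∀ x ∈ Set.Ico (a i.castSucc) (a i.succ), f x = x + c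

/-- `g` is periodic: every orbit `{gⁿ x : n ∈ ℤ}` is finite. -/
def IsPeriodicPerm (g : Equiv.Perm ℝ) : Prop :=
  ∀ x : ℝ, (Set.range fun n : ℤ => (g ^ n) x).Finite

/-- `f` is a restricted rotation: for some half-open interval `J = [a, b) ⊆ [0,1)` and some
`α ∈ [0, b - a)`, `f` is the identity outside `J` and sends `x ∈ J` to
`a + ((x - a + α) mod (b - a))`. -/
def IsRestrictedRotation (f : Equiv.Perm ℝ) : Prop :=
  ∃ a b α : ℝ, 0 ≤ a ∧ a < b ∧ b ≤ 1 ∧ α ∈ Set.Ico (0 : ℝ) (b - a) ∧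
    (∀ x : ℝ, x ∉ Set.Ico a b → f x = x) ∧
    ∀ x ∈ Set.Ico a b, f x = x + α - (b - a) * (⌊(x - a + α) / (b - a)⌋ : ℝ)

/-- `Δ_α`: the additive subgroup of `ℝ` generated by `α 0, …, α (p-1)` and `1`. -/
def Delta {p : ℕ} (α : Fin p → ℝ) : AddSubgroup ℝ :=
  AddSubgroup.closure (Set.range α ∪ {1})

/-- `g ∈ Γ_α`: `g` is an IET all of whose discontinuity points (as a map of `[0,1)`)
belong to the subgroup `Δ`. -/
def MemGamma (Δ : AddSubgroup ℝ) (g : Equiv.Perm ℝ) : Prop :=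
  IsIET g ∧
  ∀ x ∈ Set.Ico (0 : ℝ) 1, ¬ContinuousWithinAt (⇑g) (Set.Ico (0 : ℝ) 1) x → x ∈ Δ

/-- `g ∈ Γ_α(J)` for `J = [c, d)`: `g` is an IET supported in `[c, d)` all of whose
discontinuity points belong to `Δ`. -/
def MemGammaJ (Δ : AddSubgroup ℝ) (c d : ℝ) (g : Equiv.Perm ℝ) : Prop :=
  IsIET g ∧ (∀ x : ℝ, x ∉ Set.Ico c d → g x = x) ∧
  ∀ x ∈ Set.Ico (0 : ℝ) 1, ¬ContinuousWithinAt (⇑g) (Set.Ico (0 : ℝ) 1) x → x ∈ Δ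



open Function

noncomputable def sFun (a b t x : ℝ) : ℝ :=
  if x < a then x
  else if x ≤ a + t then 2*a + t - x
  else if x < b then a + t + b - x
  else x

lemma s1 (a b t x : ℝ) (hx : x < a) : sFun a b t x = x := by
  simp only [sFun]; rw [if_pos hx]

lemma s2 (a b t x : ℝ) (hx1 : a ≤ x) (hx2 : x ≤ a + t) : sFun a b t x = 2*a + t - x := by
  simp only [sFun]; rw [if_neg (by linarith), if_pos hx2]

lemma s3 (a b t x : ℝ) (ht : 0 ≤ t) (hx1 : a + t < x) (hx2 : x < b) :
    sFun a b t x = a + t + b - x := by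
  simp only [sFun]; rw [if_neg (by linarith), if_neg (by linarith), if_pos hx2]

lemma s4 (a b t x : ℝ) (ht : 0 ≤ t) (htb : a + t < b) (hx : b ≤ x) : sFun a b t x = x := by
  simp only [sFun]; rw [if_neg (by linarith), if_neg (by linarith), if_neg (by linarith)]

lemma sFun_inv (a b t : ℝ) (ht : 0 ≤ t) (htb : a + t < b) :
    Function.Involutive (sFun a b t) := by
  intro x
  rcases lt_or_ge x a with hx | hx
  · rw [s1 _ _ _ _ hx, s1 _ _ _ _ hx]
  · rcases le_or_gt x (a+t) with hx2 | hx2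
    · rw [s2 _ _ _ _ hx hx2, s2 _ _ _ _ (by linarith) (by linarith)]; ring
    · rcases lt_or_ge x b with hx3 | hx3
      · rw [s3 _ _ _ _ ht hx2 hx3, s3 _ _ _ _ ht (by linarith) (by linarith)]; ring
      · rw [s4 _ _ _ _ ht htb hx3, s4 _ _ _ _ ht htb hx3]

noncomputable def wFun (a h x : ℝ) : ℝ :=
  if x ≤ a then x
  else if x < a + h then 2*a + h - x
  else if x < a + 2*h then x + h
  else if x < a + 3*h then x - h
  else if x ≤ a + 3*h then x
  else if x < a + 4*h then 2*a + 7*h - x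
  else x

lemma w1 (a h x : ℝ) (hx : x ≤ a) : wFun a h x = x := by
  simp only [wFun]; rw [if_pos hx]

lemma w2 (a h x : ℝ) (hx1 : a < x) (hx2 : x < a + h) : wFun a h x = 2*a + h - x := by
  simp only [wFun]; rw [if_neg (by linarith), if_pos hx2]

lemma w3 (a h x : ℝ) (hh : 0 < h) (hx1 : a + h ≤ x) (hx2 : x < a + 2*h) :
    wFun a h x = x + h := by
  simp only [wFun]; rw [if_neg (by linarith), if_neg (by linarith), if_pos hx2]

lemma w4 (a h x : ℝ) (hh : 0 < h) (hx1 : a + 2*h ≤ x) (hx2 : x < a + 3*h) :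
    wFun a h x = x - h := by
  simp only [wFun]
  rw [if_neg (by linarith), if_neg (by linarith), if_neg (by linarith), if_pos hx2]

lemma w5 (a h : ℝ) (hh : 0 < h) : wFun a h (a + 3*h) = a + 3*h := by
  simp only [wFun]
  rw [if_neg (by linarith), if_neg (by linarith), if_neg (by linarith), if_neg (by linarith),
    if_pos le_rfl]

lemma w6 (a h x : ℝ) (hh : 0 < h) (hx1 : a + 3*h < x) (hx2 : x < a + 4*h) :
    wFun a h x = 2*a + 7*h - x := by
  simp only [wFun]
  rw [if_neg (by linarith), if_neg (by linarith), if_neg (by linarith), if_neg (by linarith),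
    if_neg (by linarith), if_pos hx2]

lemma w7 (a h x : ℝ) (hh : 0 < h) (hx : a + 4*h ≤ x) : wFun a h x = x := by
  simp only [wFun]
  rw [if_neg (by linarith), if_neg (by linarith), if_neg (by linarith), if_neg (by linarith),
    if_neg (by linarith), if_neg (by linarith)]

lemma wFun_inv (a h : ℝ) (hh : 0 < h) : Function.Involutive (wFun a h) := by
  intro x
  rcases le_or_gt x a with hx | hx
  · rw [w1 _ _ _ hx, w1 _ _ _ hx]
  · rcases lt_or_ge x (a+h) with hx2 | hx2
    · rw [w2 _ _ _ hx hx2, w2 _ _ _ (by linarith) (by linarith)]; ring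
    · rcases lt_or_ge x (a+2*h) with hx3 | hx3
      · rw [w3 _ _ _ hh hx2 hx3, w4 _ _ _ hh (by linarith) (by linarith)]; ring
      · rcases lt_or_ge x (a+3*h) with hx4 | hx4
        · rw [w4 _ _ _ hh hx3 hx4, w3 _ _ _ hh (by linarith) (by linarith)]; ring
        · rcases eq_or_lt_of_le hx4 with hx5 | hx5
          · rw [← hx5, w5 _ _ hh, w5 _ _ hh]
          · rcases lt_or_ge x (a+4*h) with hx6 | hx6
            · rw [w6 _ _ _ hh hx5 hx6, w6 _ _ _ hh (by linarith) (by linarith)]; ring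
            · rw [w7 _ _ _ hh hx6, w7 _ _ _ hh hx6]

/-- the product of the two flips `w ∘ σ ∘ w` is the half-rotation, away from 4 points. -/
lemma step1 (a b h : ℝ) (hh : 0 < h) (hb : b = a + 4*h) (x : ℝ) (e1 : x ≠ a)
    (e2 : x ≠ a + h) (e3 : x ≠ a + 2*h) (e4 : x ≠ a + 3*h) :
    wFun a h (sFun a b (2*h) (wFun a h x)) =
      (if x < a then x else if x < a + 2*h then x + 2*h
       else if x < a + 4*h then x - 2*h else x) := by
  subst hb
  rcases lt_trichotomy x a with h1 | h1 | h1
  · rw [w1 _ _ _ h1.le, s1 _ _ _ _ h1, w1 _ _ _ h1.le, if_pos h1]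
  · exact absurd h1 e1
  · rcases lt_trichotomy x (a+h) with h2 | h2 | h2
    · rw [w2 _ _ _ h1 h2, s2 _ _ _ _ (by linarith) (by linarith),
        w3 _ _ _ hh (by linarith) (by linarith), if_neg (by linarith), if_pos (by linarith)]
      ring
    · exact absurd h2 e2
    · rcases lt_trichotomy x (a+2*h) with h3 | h3 | h3
      · rw [w3 _ _ _ hh h2.le h3, s3 _ _ _ _ (by linarith) (by linarith) (by linarith),
          w6 _ _ _ hh (by linarith) (by linarith), if_neg (by linarith), if_pos (by linarith)]
        ring
      · exact absurd h3 e3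
      · rcases lt_trichotomy x (a+3*h) with h4 | h4 | h4
        · rw [w4 _ _ _ hh h3.le h4, s2 _ _ _ _ (by linarith) (by linarith),
            w2 _ _ _ (by linarith) (by linarith), if_neg (by linarith), if_neg (by linarith),
            if_pos (by linarith)]
          ring
        · exact absurd h4 e4
        · rcases lt_or_ge x (a+4*h) with h5 | h5
          · rw [w6 _ _ _ hh h4 h5, s3 _ _ _ _ (by linarith) (by linarith) (by linarith),
              w4 _ _ _ hh (by linarith) (by linarith), if_neg (by linarith),
              if_neg (by linarith), if_pos (by linarith)]
            ring
          · rw [w7 _ _ _ hh h5, s4 _ _ _ _ (by linarith) (by linarith) (by linarith),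
              w7 _ _ _ hh h5, if_neg (by linarith), if_neg (by linarith), if_neg (by linarith)]

/-- σ composed with the half-rotation is the full flip, everywhere. -/
lemma step2 (a b h : ℝ) (hh : 0 < h) (hb : b = a + 4*h) (x : ℝ) :
    sFun a b (2*h)
      (if x < a then x else if x < a + 2*h then x + 2*h
       else if x < a + 4*h then x - 2*h else x) = sFun a b 0 x := by
  subst hb
  rcases lt_trichotomy x a with h1 | h1 | h1
  · rw [if_pos h1, s1 _ _ _ _ h1, s1 _ _ _ _ h1]
  · subst h1
    rw [if_neg (by linarith), if_pos (by linarith), s2 _ _ _ _ (by linarith) (by linarith),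
      s2 _ _ _ _ (by linarith) (by linarith)]
    ring
  · rcases lt_or_ge x (a+2*h) with h2 | h2
    · rw [if_neg (by linarith), if_pos h2, s3 _ _ _ _ (by linarith) (by linarith) (by linarith),
        s3 _ _ _ _ (by linarith) (by linarith) (by linarith)]
      ring
    · rcases lt_or_ge x (a+4*h) with h3 | h3
      · rw [if_neg (by linarith), if_neg (by linarith), if_pos h3,
          s2 _ _ _ _ (by linarith) (by linarith), s3 _ _ _ _ le_rfl (by linarith) (by linarith)]
        ring
      · rw [if_neg (by linarith), if_neg (by linarith), if_neg (by linarith),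
          s4 _ _ _ _ (by linarith) (by linarith) h3, s4 _ _ _ _ le_rfl (by linarith) h3]

/-- σβ ∘ σ0 is the exact rotation by β on `[a,b)`. -/
lemma rho_eq (a b β : ℝ) (hβ : 0 ≤ β) (hβb : a + β < b) (x : ℝ) :
    sFun a b β (sFun a b 0 x) =
      (if x < a then x else if x < b - β then x + β else if x < b then x + β - (b-a) else x) := by
  rcases lt_trichotomy x a with h1 | h1 | h1
  · rw [s1 _ _ _ _ h1, s1 _ _ _ _ h1, if_pos h1]
  · subst h1
    rw [s2 _ _ _ _ le_rfl (by linarith), s2 _ _ _ _ (by linarith) (by linarith),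
      if_neg (by linarith), if_pos (by linarith)]
    ring
  · rcases lt_or_ge x b with h2 | h2
    · rw [s3 _ _ _ _ le_rfl (by linarith) h2]
      rcases lt_or_ge x (b - β) with h3 | h3
      · rw [s3 _ _ _ _ hβ (by linarith) (by linarith), if_neg (by linarith), if_pos h3]; ring
      · rw [s2 _ _ _ _ (by linarith) (by linarith), if_neg (by linarith), if_neg (by linarith),
          if_pos h2]
        ring
    · rw [s4 _ _ _ _ le_rfl (by linarith) h2, s4 _ _ _ _ hβ hβb h2, if_neg (by linarith),
        if_neg (by linarith), if_neg (by linarith)]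

lemma isFIET_of_breaks (f : Equiv.Perm ℝ)
    (hf : ∀ x : ℝ, x ∉ Set.Ico (0:ℝ) 1 → f x = x)
    (D : Finset ℝ) (h0 : (0:ℝ) ∈ D) (h1 : (1:ℝ) ∈ D)
    (hD : ∀ d ∈ D, 0 ≤ d ∧ d ≤ 1)
    (hiso : ∀ u v : ℝ, u < v → (∀ d ∈ D, d ∉ Set.Ioo u v) →
      (∃ c : ℝ, ∀ x ∈ Set.Ioo u v, f x = x + c) ∨
      (∃ c : ℝ, ∀ x ∈ Set.Ioo u v, f x = c - x)) :
    IsFIET f := by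
  refine ⟨hf, ?_⟩
  have h2 : 2 ≤ D.card := by
    rw [show (2:ℕ) = 1 + 1 from rfl]
    exact Finset.one_lt_card.mpr ⟨0, h0, 1, h1, by norm_num⟩
  obtain ⟨m, hm⟩ : ∃ m, D.card = m + 2 := ⟨D.card - 2, by omega⟩
  set e := D.orderIsoOfFin hm with he
  refine ⟨m, fun i => (e i : ℝ), ?_, ?_, ?_, ?_⟩
  · have hle : (e 0 : ℝ) ≤ 0 := by
      have h := e.monotone (Fin.zero_le (e.symm ⟨0, h0⟩))
      rw [OrderIso.apply_symm_apply] at h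
      exact_mod_cast h
    exact le_antisymm hle (hD _ (e 0).2).1
  · have hge : (1:ℝ) ≤ (e (Fin.last (m+1)) : ℝ) := by
      have h := e.monotone (Fin.le_last (e.symm ⟨1, h1⟩))
      rw [OrderIso.apply_symm_apply] at h
      exact_mod_cast h
    exact le_antisymm (hD _ (e (Fin.last (m+1))).2).2 hge
  · intro i j hij
    exact_mod_cast e.strictMono hij
  · intro i
    refine hiso _ _ ?_ ?_
    · exact_mod_cast e.strictMono (Fin.castSucc_lt_succ : i.castSucc < i.succ)
    · intro d hd hmem
      obtain ⟨hd1, hd2⟩ := hmem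
      have hdj : (e (e.symm ⟨d, hd⟩) : ℝ) = d := by rw [OrderIso.apply_symm_apply]
      rw [← hdj] at hd1 hd2
      have hj1 : i.castSucc < e.symm ⟨d, hd⟩ := e.lt_iff_lt.mp (by exact_mod_cast hd1)
      have hj2 : e.symm ⟨d, hd⟩ < i.succ := e.lt_iff_lt.mp (by exact_mod_cast hd2)
      rw [Fin.lt_def] at hj1 hj2
      simp only [Fin.coe_castSucc, Fin.val_succ] at hj1 hj2
      omega

lemma notIco {x : ℝ} (hx : x ∉ Set.Ico (0:ℝ) 1) : x < 0 ∨ 1 ≤ x := by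
  simp only [Set.mem_Ico, not_and, not_lt] at hx
  rcases lt_or_ge x 0 with h | h
  · exact Or.inl h
  · exact Or.inr (hx h)

lemma gapsplit {u v p : ℝ} (huv : u < v) (hp : p ∉ Set.Ioo u v) (h : u < p) : p ≥ v := by
  by_contra hc
  exact hp ⟨h, by linarith⟩


lemma isFIET_sPerm (a b t : ℝ) (h0a : 0 ≤ a) (hb1 : b ≤ 1) (ht : 0 ≤ t) (htb : a + t < b) :
    IsFIET (Involutive.toPerm (sFun a b t) (sFun_inv a b t ht htb)) := by
  apply isFIET_of_breaks _ ?_ ({0, a, a+t, b, 1} : Finset ℝ) (by simp) (by simp) ?_ ?_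
  · intro x hx
    simp only [Involutive.coe_toPerm]
    rcases notIco hx with h | h
    · exact s1 _ _ _ _ (by linarith)
    · exact s4 _ _ _ _ ht htb (by linarith)
  · intro d hd
    simp only [Finset.mem_insert, Finset.mem_singleton] at hd
    rcases hd with rfl | rfl | rfl | rfl | rfl <;> constructor <;> linarith
  · intro u v huv hgap
    simp only [Involutive.coe_toPerm]
    have hA := hgap a (by simp)
    have hAt := hgap (a+t) (by simp)
    have hB := hgap b (by simp)
    rcases le_or_gt v a with hva | hva
    · exact Or.inl ⟨0, fun x hx => by rw [s1 _ _ _ _ (by linarith [hx.1, hx.2])]; ring⟩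
    · have hau : a ≤ u := le_of_not_gt (fun hc => hA ⟨hc, hva⟩)
      rcases le_or_gt v (a+t) with hvt | hvt
      · exact Or.inr ⟨2*a+t, fun x hx => s2 _ _ _ _ (le_trans hau hx.1.le) (le_trans hx.2.le hvt)⟩
      · have hatu : a + t ≤ u := le_of_not_gt (fun hc => hAt ⟨hc, hvt⟩)
        rcases le_or_gt v b with hvb | hvb
        · exact Or.inr ⟨a+t+b, fun x hx =>
            s3 _ _ _ _ ht (lt_of_le_of_lt hatu hx.1) (lt_of_lt_of_le hx.2 hvb)⟩
        · have hbu : b ≤ u := le_of_not_gt (fun hc => hB ⟨hc, hvb⟩)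
          exact Or.inl ⟨0, fun x hx => by
            rw [s4 _ _ _ _ ht htb (le_trans hbu hx.1.le)]; ring⟩

lemma isFIET_wPerm (a h : ℝ) (h0a : 0 ≤ a) (hb1 : a + 4*h ≤ 1) (hh : 0 < h) :
    IsFIET (Involutive.toPerm (wFun a h) (wFun_inv a h hh)) := by
  apply isFIET_of_breaks _ ?_ ({0, a, a+h, a+2*h, a+3*h, a+4*h, 1} : Finset ℝ)
    (by simp) (by simp) ?_ ?_
  · intro x hx
    simp only [Involutive.coe_toPerm]
    rcases notIco hx with h' | h'
    · exact w1 _ _ _ (by linarith)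
    · exact w7 _ _ _ hh (by linarith)
  · intro d hd
    simp only [Finset.mem_insert, Finset.mem_singleton] at hd
    rcases hd with rfl | rfl | rfl | rfl | rfl | rfl | rfl <;> constructor <;> linarith
  · intro u v huv hgap
    simp only [Involutive.coe_toPerm]
    have hA := hgap a (by simp)
    have h1 := hgap (a+h) (by simp)
    have h2 := hgap (a+2*h) (by simp)
    have h3 := hgap (a+3*h) (by simp)
    have h4 := hgap (a+4*h) (by simp)
    rcases le_or_gt v a with hva | hva
    · exact Or.inl ⟨0, fun x hx => by rw [w1 _ _ _ (by linarith [hx.1, hx.2])]; ring⟩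
    · have hau : a ≤ u := le_of_not_gt (fun hc => hA ⟨hc, hva⟩)
      rcases le_or_gt v (a+h) with hv1 | hv1
      · exact Or.inr ⟨2*a+h, fun x hx =>
          w2 _ _ _ (lt_of_le_of_lt hau hx.1) (lt_of_lt_of_le hx.2 hv1)⟩
      · have hu1 : a + h ≤ u := le_of_not_gt (fun hc => h1 ⟨hc, hv1⟩)
        rcases le_or_gt v (a+2*h) with hv2 | hv2
        · exact Or.inl ⟨h, fun x hx =>
            w3 _ _ _ hh (le_trans hu1 hx.1.le) (lt_of_lt_of_le hx.2 hv2)⟩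
        · have hu2 : a + 2*h ≤ u := le_of_not_gt (fun hc => h2 ⟨hc, hv2⟩)
          rcases le_or_gt v (a+3*h) with hv3 | hv3
          · exact Or.inl ⟨-h, fun x hx => by
              rw [w4 _ _ _ hh (le_trans hu2 hx.1.le) (lt_of_lt_of_le hx.2 hv3)]; ring⟩
          · have hu3 : a + 3*h ≤ u := le_of_not_gt (fun hc => h3 ⟨hc, hv3⟩)
            rcases le_or_gt v (a+4*h) with hv4 | hv4
            · exact Or.inr ⟨2*a+7*h, fun x hx =>
                w6 _ _ _ hh (lt_of_le_of_lt hu3 hx.1) (lt_of_lt_of_le hx.2 hv4)⟩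
            · have hu4 : a + 4*h ≤ u := le_of_not_gt (fun hc => h4 ⟨hc, hv4⟩)
              exact Or.inl ⟨0, fun x hx => by
                rw [w7 _ _ _ hh (le_trans hu4 hx.1.le)]; ring⟩

lemma isFIET_rho (a b β : ℝ) (h0a : 0 ≤ a) (hab : a < b) (hb1 : b ≤ 1)
    (hβ : 0 ≤ β) (hβb : a + β < b) :
    IsFIET (Involutive.toPerm (sFun a b β) (sFun_inv a b β hβ hβb) *
      Involutive.toPerm (sFun a b 0) (sFun_inv a b 0 le_rfl (by linarith))) := by
  have hcoe : ∀ x : ℝ,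
      (Involutive.toPerm (sFun a b β) (sFun_inv a b β hβ hβb) *
        Involutive.toPerm (sFun a b 0) (sFun_inv a b 0 le_rfl (by linarith))) x =
      (if x < a then x else if x < b - β then x + β else if x < b then x + β - (b-a) else x) :=
    fun x => rho_eq a b β hβ hβb x
  apply isFIET_of_breaks _ ?_ ({0, a, b - β, b, 1} : Finset ℝ) (by simp) (by simp) ?_ ?_
  · intro x hx
    rw [hcoe x]
    rcases notIco hx with h | h
    · rw [if_pos (by linarith)]
    · rw [if_neg (by linarith), if_neg (by linarith), if_neg (by linarith)]
  · intro d hd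
    simp only [Finset.mem_insert, Finset.mem_singleton] at hd
    rcases hd with rfl | rfl | rfl | rfl | rfl <;> constructor <;> linarith
  · intro u v huv hgap
    have hA := hgap a (by simp)
    have hBβ := hgap (b - β) (by simp)
    have hB := hgap b (by simp)
    rcases le_or_gt v a with hva | hva
    · exact Or.inl ⟨0, fun x hx => by rw [hcoe x, if_pos (by linarith [hx.1, hx.2])]; ring⟩
    · have hau : a ≤ u := le_of_not_gt (fun hc => hA ⟨hc, hva⟩)
      rcases le_or_gt v (b - β) with hvβ | hvβ
      · exact Or.inl ⟨β, fun x hx => by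
          rw [hcoe x, if_neg (by linarith [hx.1]), if_pos (by linarith [hx.2])]⟩
      · have hβu : b - β ≤ u := le_of_not_gt (fun hc => hBβ ⟨hc, hvβ⟩)
        rcases le_or_gt v b with hvb | hvb
        · exact Or.inl ⟨β - (b-a), fun x hx => by
            rw [hcoe x, if_neg (by linarith [hx.1]), if_neg (by linarith [hx.1]),
              if_pos (by linarith [hx.2])]
            ring⟩
        · have hbu : b ≤ u := le_of_not_gt (fun hc => hB ⟨hc, hvb⟩)
          exact Or.inl ⟨0, fun x hx => by
            rw [hcoe x, if_neg (by linarith [hx.1]), if_neg (by linarith [hx.1]),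
              if_neg (by linarith [hx.1])]
            ring⟩


/-- The symmetry `𝓘_(a,b)` and the restricted rotation `R_{α,[a,b)}` are commutators
in `𝒢̄`. -/
theorem symmetry_and_restricted_rotation_are_commutators
    (a b : ℝ) (h0a : 0 ≤ a) (hab : a < b) (hb1 : b ≤ 1)
    (α : ℝ) (hα : α ∈ Set.Ico (0 : ℝ) (b - a)) :
    (∀ S : Equiv.Perm ℝ,
      (∀ x ∈ Set.Ioo a b, S x = a + b - x) → (∀ x : ℝ, x ∉ Set.Ioo a b → S x = x) →
      ∃ u v : Equiv.Perm ℝ, IsFIET u ∧ IsFIET v ∧ FEq S ⁅u, v⁆) ∧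
    (∀ R : Equiv.Perm ℝ,
      (∀ x ∈ Set.Ico a b, R x = x + α - (b - a) * (⌊(x - a + α) / (b - a)⌋ : ℝ)) →
      (∀ x : ℝ, x ∉ Set.Ico a b → R x = x) →
      ∃ u v : Equiv.Perm ℝ, IsFIET u ∧ IsFIET v ∧ FEq R ⁅u, v⁆) := by
  constructor
  · -- the symmetry part
    intro S hS1 hS2
    have hh : 0 < (b-a)/4 := by linarith
    have hb4 : b = a + 4*((b-a)/4) := by ring
    have ht : (0:ℝ) ≤ 2*((b-a)/4) := by linarith
    have htb : a + 2*((b-a)/4) < b := by linarith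
    refine ⟨Involutive.toPerm (sFun a b (2*((b-a)/4))) (sFun_inv a b _ ht htb),
      Involutive.toPerm (wFun a ((b-a)/4)) (wFun_inv a _ hh),
      isFIET_sPerm a b _ h0a hb1 ht htb,
      isFIET_wPerm a ((b-a)/4) h0a (by rw [← hb4]; exact hb1) hh, ?_⟩
    have hSeq : ∀ x, S x = sFun a b 0 x := by
      intro x
      rcases lt_trichotomy x a with h1 | h1 | h1
      · rw [hS2 x (by simp only [Set.mem_Ioo, not_and, not_lt]; intro h'; linarith),
          s1 _ _ _ _ h1]
      · subst h1
        rw [hS2 x (fun hc => absurd hc.1 (lt_irrefl x)), s2 _ _ _ _ le_rfl (by linarith)]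
        ring
      · rcases lt_or_ge x b with h2 | h2
        · rw [hS1 x ⟨h1, h2⟩, s3 _ _ _ _ le_rfl (by linarith) h2]; ring
        · rw [hS2 x (by simp only [Set.mem_Ioo, not_and, not_lt]; intro h'; exact h2),
            s4 _ _ _ _ le_rfl (by linarith) h2]
    have hcomm : ∀ x : ℝ,
        (⁅Involutive.toPerm (sFun a b (2*((b-a)/4))) (sFun_inv a b _ ht htb),
          Involutive.toPerm (wFun a ((b-a)/4)) (wFun_inv a _ hh)⁆ : Equiv.Perm ℝ) x =
        sFun a b (2*((b-a)/4)) (wFun a ((b-a)/4)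
          (sFun a b (2*((b-a)/4)) (wFun a ((b-a)/4) x))) := fun x => rfl
    refine Set.Finite.subset (s := {a, a + (b-a)/4, a + 2*((b-a)/4), a + 3*((b-a)/4)})
      (((((Set.finite_singleton (a+3*((b-a)/4))).insert (a+2*((b-a)/4))).insert
        (a+(b-a)/4)).insert a)) ?_
    intro x hx
    by_contra hmem
    simp only [Set.mem_insert_iff, Set.mem_singleton_iff, not_or] at hmem
    obtain ⟨e1, e2, e3, e4⟩ := hmem
    refine hx ?_
    rw [hcomm x, step1 a b ((b-a)/4) hh hb4 x e1 e2 e3 e4, step2 a b ((b-a)/4) hh hb4 x]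
    exact hSeq x
  · -- the restricted rotation part
    intro R hR hRout
    obtain ⟨hα0, hα1⟩ := hα
    have hβ0 : (0:ℝ) ≤ α/2 := by linarith
    have hβb : a + α/2 < b := by linarith
    have hab0 : a + 0 < b := by linarith
    refine ⟨Involutive.toPerm (sFun a b (α/2)) (sFun_inv a b (α/2) hβ0 hβb) *
        Involutive.toPerm (sFun a b 0) (sFun_inv a b 0 le_rfl hab0),
      Involutive.toPerm (sFun a b 0) (sFun_inv a b 0 le_rfl hab0),
      isFIET_rho a b (α/2) h0a hab hb1 hβ0 hβb,
      isFIET_sPerm a b 0 h0a hb1 le_rfl hab0, ?_⟩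
    have hinv0 := sFun_inv a b 0 le_rfl hab0
    have hcomm : ∀ x : ℝ,
        (⁅Involutive.toPerm (sFun a b (α/2)) (sFun_inv a b (α/2) hβ0 hβb) *
            Involutive.toPerm (sFun a b 0) (sFun_inv a b 0 le_rfl hab0),
          Involutive.toPerm (sFun a b 0) (sFun_inv a b 0 le_rfl hab0)⁆ : Equiv.Perm ℝ) x =
        sFun a b (α/2) (sFun a b 0 (sFun a b 0 (sFun a b 0
          (sFun a b (α/2) (sFun a b 0 x))))) := fun x => rfl
    have hkey : ∀ x : ℝ,
        (⁅Involutive.toPerm (sFun a b (α/2)) (sFun_inv a b (α/2) hβ0 hβb) *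
            Involutive.toPerm (sFun a b 0) (sFun_inv a b 0 le_rfl hab0),
          Involutive.toPerm (sFun a b 0) (sFun_inv a b 0 le_rfl hab0)⁆ : Equiv.Perm ℝ) x =
          R x := by
      intro x
      rw [hcomm x, hinv0 (sFun a b (α/2) (sFun a b 0 x)), rho_eq a b (α/2) hβ0 hβb x,
        rho_eq a b (α/2) hβ0 hβb]
      rcases lt_or_ge x a with h1 | h1
      · rw [hRout x (by simp only [Set.mem_Ico, not_and, not_lt]; intro h'; linarith),
          if_pos h1, if_pos h1]
      · rcases lt_or_ge x b with h2 | h2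
        · rw [hR x ⟨h1, h2⟩]
          rcases lt_or_ge x (b - α) with h3 | h3
          · have hfl : ⌊(x - a + α)/(b-a)⌋ = 0 := by
              rw [Int.floor_eq_zero_iff]
              constructor
              · apply div_nonneg <;> linarith
              · rw [div_lt_one (by linarith)]; linarith
            rw [hfl, if_neg (not_lt.mpr h1), if_pos (show x < b - α/2 by linarith),
              if_neg (show ¬(x + α/2 < a) by push_neg; linarith),
              if_pos (show x + α/2 < b - α/2 by linarith)]
            push_cast
            ring
          · have hfl : ⌊(x - a + α)/(b-a)⌋ = 1 := by
              rw [Int.floor_eq_iff]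
              push_cast
              constructor
              · rw [le_div_iff₀ (by linarith)]; linarith
              · rw [div_lt_iff₀ (by linarith)]; linarith
            rcases lt_or_ge x (b - α/2) with h4 | h4
            · rw [hfl, if_neg (not_lt.mpr h1), if_pos h4,
                if_neg (show ¬(x + α/2 < a) by push_neg; linarith),
                if_neg (show ¬(x + α/2 < b - α/2) by push_neg; linarith),
                if_pos (show x + α/2 < b by linarith)]
              push_cast
              ring
            · rw [hfl, if_neg (not_lt.mpr h1), if_neg (not_lt.mpr h4), if_pos h2,
                if_neg (show ¬(x + α/2 - (b-a) < a) by push_neg; linarith),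
                if_pos (show x + α/2 - (b-a) < b - α/2 by linarith)]
              push_cast
              ring
        · rw [hRout x (by simp only [Set.mem_Ico, not_and, not_lt]; intro h'; exact h2),
            if_neg (not_lt.mpr h1), if_neg (show ¬(x < b - α/2) by push_neg; linarith),
            if_neg (not_lt.mpr h2), if_neg (not_lt.mpr h1),
            if_neg (show ¬(x < b - α/2) by push_neg; linarith), if_neg (not_lt.mpr h2)]
    exact Set.Finite.subset (Set.finite_singleton 0) (fun x hx => absurd (hkey x).symm hx)
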